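/- Over an item alphabet with at least four distinct items a, b, c, d, for both the weak and the strong occurrence modes, under partial non-inclusion the soft-embedding containment relation does not dominate the strict-embedding containment relation: there exist an NSP p and a sequence s (namely p = ⟨a ¬(bc) d⟩ with positive singleton itemsets {a}, {d} and negative itemset {b,c}, and s = ⟨a b c d⟩ the list of singleton itemsets {a}, {b}, {c}, {d}) such that p occurs in s under (soft, partial) but not under (strict, partial), in both the weak and strong modes. -/

import Mathlib

namespace NSPpaper

/-- A sequence is a finite list of itemsets (finite sets of items). -/
abbrev Seq (ι : Type*) := List (Finset ι)

/-- `P` is partially non-included in `I`: `P` is empty or some element of `P` is not in `I`. -/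
def PartialNonIncl {ι : Type*} (P I : Finset ι) : Prop := P = ∅ ∨ ∃ e ∈ P, e ∉ I

/-- `P` is totally non-included in `I`: no element of `P` is in `I`. -/
def TotalNonIncl {ι : Type*} (P I : Finset ι) : Prop := ∀ e ∈ P, e ∉ I

/-- A negative sequential pattern `⟨p₁ ¬q₁ p₂ ¬q₂ … ¬q_{m-1} p_m⟩`:
nonempty positive itemsets `pos = [p₁, …, p_m]` and negative itemsets
`neg = [q₁, …, q_{m-1}]` (possibly empty itemsets). -/
structure NSP (ι : Type*) where
  pos : List (Finset ι)
  neg : List (Finset ι)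
  pos_ne : pos ≠ []
  pos_nonempty : ∀ P ∈ pos, P.Nonempty
  len : neg.length + 1 = pos.length

variable {ι : Type*}

/-- `e` is an embedding of the positive part `p⁺` of `p` in `s`:
strictly increasing positions with `p_i ⊆ s_{e_i}`. -/
def IsPosEmbedding (p : NSP ι) (s : Seq ι) (e : Fin p.pos.length → Fin s.length) : Prop :=
  StrictMono e ∧ ∀ i, p.pos.get i ⊆ s.get (e i)

/-- Soft embedding w.r.t. the non-inclusion relation `ni`:
an embedding of `p⁺` such that `q_i ⋫ s_j` for every `j` with `e_i < j < e_{i+1}`. -/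
def IsSoftEmbedding (ni : Finset ι → Finset ι → Prop) (p : NSP ι) (s : Seq ι)
    (e : Fin p.pos.length → Fin s.length) : Prop :=
  IsPosEmbedding p s e ∧
  ∀ i : Fin p.neg.length, ∀ j : Fin s.length,
    (e ⟨i.1, by have h1 := p.len; have h2 := i.2; omega⟩).1 < j.1 →
    j.1 < (e ⟨i.1 + 1, by have h1 := p.len; have h2 := i.2; omega⟩).1 →
    ni (p.neg.get i) (s.get j)

/-- Union `⋃_{a < j < b} s_j` of the itemsets of `s` strictly between positions `a` and `b`. -/
def segUnion [DecidableEq ι] (s : Seq ι) (a b : ℕ) : Finset ι :=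
  (Finset.Ioo a b).biUnion (fun j => s.getD j ∅)

/-- Strict embedding w.r.t. the non-inclusion relation `ni`:
an embedding of `p⁺` such that `q_i ⋫ ⋃_{e_i < j < e_{i+1}} s_j`. -/
def IsStrictEmbedding [DecidableEq ι] (ni : Finset ι → Finset ι → Prop) (p : NSP ι) (s : Seq ι)
    (e : Fin p.pos.length → Fin s.length) : Prop :=
  IsPosEmbedding p s e ∧
  ∀ i : Fin p.neg.length,
    ni (p.neg.get i)
      (segUnion s (e ⟨i.1, by have h1 := p.len; have h2 := i.2; omega⟩).1
                  (e ⟨i.1 + 1, by have h1 := p.len; have h2 := i.2; omega⟩).1)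

/-- Embedding type: soft or strict. -/
inductive EmbT | soft | strict

/-- `τ`-embedding (soft or strict) w.r.t. non-inclusion `ni`. -/
def IsEmb [DecidableEq ι] (τ : EmbT) (ni : Finset ι → Finset ι → Prop) (p : NSP ι) (s : Seq ι)
    (e : Fin p.pos.length → Fin s.length) : Prop :=
  match τ with
  | .soft => IsSoftEmbedding ni p s e
  | .strict => IsStrictEmbedding ni p s e

/-- `p` weakly occurs in `s` under `(τ, ni)`: some `τ`-embedding of `p` in `s` exists. -/
def WeakOcc [DecidableEq ι] (τ : EmbT) (ni : Finset ι → Finset ι → Prop)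
    (p : NSP ι) (s : Seq ι) : Prop :=
  ∃ e, IsEmb τ ni p s e

/-- `p` strongly occurs in `s` under `(τ, ni)`: some embedding of `p⁺` in `s` exists and
every embedding of `p⁺` in `s` is a `τ`-embedding of `p`. -/
def StrongOcc [DecidableEq ι] (τ : EmbT) (ni : Finset ι → Finset ι → Prop)
    (p : NSP ι) (s : Seq ι) : Prop :=
  (∃ e, IsPosEmbedding p s e) ∧ ∀ e, IsPosEmbedding p s e → IsEmb τ ni p s e

/-- Occurrence mode: weak or strong. -/
inductive OccMode | weak | strong

/-- `p` occurs in `s` under mode `μ`, embedding type `τ` and non-inclusion `ni`. -/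
def Occurs [DecidableEq ι] (μ : OccMode) (τ : EmbT) (ni : Finset ι → Finset ι → Prop)
    (p : NSP ι) (s : Seq ι) : Prop :=
  match μ with
  | .weak => WeakOcc τ ni p s
  | .strong => StrongOcc τ ni p s

/-- Dominance: `θ ⩾ θ'` iff `p θ s` implies `p θ' s` for every NSP `p` and sequence `s`. -/
def Dominates (θ θ' : NSP ι → Seq ι → Prop) : Prop :=
  ∀ (p : NSP ι) (s : Seq ι), θ p s → θ' p s

/-- The set Θ of the eight containment relations. -/
def Theta (ι : Type*) [DecidableEq ι] : Set (NSP ι → Seq ι → Prop) :=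
  { θ | ∃ (μ : OccMode) (τ : EmbT) (ni : Finset ι → Finset ι → Prop),
      (ni = PartialNonIncl ∨ ni = TotalNonIncl) ∧ θ = Occurs μ τ ni }

/-- `p ⊑ p'`. -/
def NspIncl [DecidableEq ι] (p p' : NSP ι) : Prop :=
  p.pos.length ≤ p'.pos.length ∧
  ∃ u : Fin p.pos.length → Fin p'.pos.length, StrictMono u ∧
    (∀ i, p.pos.get i ⊆ p'.pos.get (u i)) ∧
    (∀ i : Fin p.neg.length,
      p.neg.get i ⊆
        (Finset.Ico (u ⟨i.1, by have h1 := p.len; have h2 := i.2; omega⟩).1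
                    (u ⟨i.1 + 1, by have h1 := p.len; have h2 := i.2; omega⟩).1).biUnion
          (fun j => p'.neg.getD j ∅)) ∧
    (p.pos.length = p'.pos.length →
      (∃ j : Fin p.pos.length, p.pos.get j ≠ p'.pos.getD j.1 ∅) ∨
      (∃ j : Fin p.neg.length, p.neg.get j ≠ p'.neg.getD j.1 ∅))

/-- `p ◁ p'`. -/
def Lhd (p p' : NSP ι) : Prop :=
  p.pos.length ≤ p'.pos.length ∧
  (∀ i : Fin p.pos.length, p.pos.get i ⊆ p'.pos.getD i.1 ∅) ∧
  (∀ i : Fin p.neg.length, p.neg.get i ⊆ p'.neg.getD i.1 ∅) ∧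
  (p.pos.length = p'.pos.length →
    p.pos.getD (p.pos.length - 1) ∅ ≠ p'.pos.getD (p.pos.length - 1) ∅ ∨
    ∃ j : Fin p.neg.length, p.neg.get j ≠ p'.neg.getD j.1 ∅)

/-- `p ⊑⁺ p'`. -/
def NspInclPlus (p p' : NSP ι) : Prop :=
  p.pos.length = p'.pos.length ∧
  (∀ i : Fin p.pos.length, p.pos.get i = p'.pos.getD i.1 ∅) ∧
  (∀ i : Fin p.neg.length, p.neg.get i ⊆ p'.neg.getD i.1 ∅) ∧
  (∃ j : Fin p.neg.length, p.neg.get j ≠ p'.neg.getD j.1 ∅)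

/-- Support of `p` in the dataset `D` w.r.t. the containment relation `θ`:
the number of sequences of `D` in which `p` occurs according to `θ`. -/
noncomputable def supp (θ : NSP ι → Seq ι → Prop) (D : Finset (Seq ι)) (p : NSP ι) : ℕ :=
  letI := Classical.decPred (fun s : Seq ι => θ p s)
  (D.filter fun s => θ p s).card

/-- under partial non-inclusion, soft-embedding containment does not
dominate strict-embedding containment: with `p = ⟨a ¬(bc) d⟩` and `s = ⟨a b c d⟩`,
`p` occurs in `s` under `(soft, partial)` (weakly and strongly) but not under
`(strict, partial)` (neither weakly nor strongly). -/
theorem soft_not_dominates_strict_partial {ι : Type*} [DecidableEq ι]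
    (a b c d : ι) (hab : a ≠ b) (hac : a ≠ c) (had : a ≠ d)
    (hbc : b ≠ c) (hbd : b ≠ d) (hcd : c ≠ d) :
    ∃ (p : NSP ι) (s : Seq ι),
      p.pos = [{a}, {d}] ∧ p.neg = [{b, c}] ∧ s = [{a}, {b}, {c}, {d}] ∧
      WeakOcc .soft PartialNonIncl p s ∧ StrongOcc .soft PartialNonIncl p s ∧
      ¬ WeakOcc .strict PartialNonIncl p s ∧ ¬ StrongOcc .strict PartialNonIncl p s := by
  classical
  set s : Seq ι := [{a}, {b}, {c}, {d}] with hs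
  refine ⟨⟨[{a}, {d}], [{b, c}], by simp, ?_, rfl⟩, s, rfl, rfl, rfl, ?_⟩
  · intro P hP
    simp only [List.mem_cons, List.mem_singleton] at hP
    rcases hP with h | h | h
    · exact h ▸ ⟨a, by simp⟩
    · exact h ▸ ⟨d, by simp⟩
    · simp at h
  set p : NSP ι := ⟨[{a}, {d}], [{b, c}], by simp, _, rfl⟩ with hp
  -- positions in s containing a resp. d
  have ha0 : ∀ j : Fin s.length, a ∈ s.get j → j = ⟨0, by simp [hs]⟩ := by
    intro j hj; fin_cases j <;> simp_all [hs]
  have hd3 : ∀ j : Fin s.length, d ∈ s.get j → j = ⟨3, by simp [hs]⟩ := by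
    intro j hj; fin_cases j <;> simp_all [hs]
  -- every pos embedding is forced
  have hforce : ∀ e : Fin p.pos.length → Fin s.length, IsPosEmbedding p s e →
      e ⟨0, by simp [hp]⟩ = ⟨0, by simp [hs]⟩ ∧ e ⟨1, by simp [hp]⟩ = ⟨3, by simp [hs]⟩ := by
    intro e he
    have h0 := he.2 ⟨0, by simp [hp]⟩
    have h1 := he.2 ⟨1, by simp [hp]⟩
    refine ⟨ha0 _ ?_, hd3 _ ?_⟩
    · exact h0 (by simp [hp])
    · exact h1 (by simp [hp])
  -- the canonical embedding
  have hposlen : p.pos.length = 2 := by simp [hp]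
  have hslen : s.length = 4 := by simp [hs]
  let e0 : Fin p.pos.length → Fin s.length := fun i =>
    if i.1 = 0 then ⟨0, by omega⟩ else ⟨3, by omega⟩
  have he0pos : IsPosEmbedding p s e0 := by
    constructor
    · intro i j hij
      have hi : i.1 < 2 := i.2
      have hj : j.1 < 2 := j.2
      have hij' : i.1 < j.1 := hij
      have h01 : i.1 = 0 ∧ j.1 = 1 := by omega
      simp only [e0, h01.1, h01.2]
      simp [Fin.lt_def, -Fin.val_fin_lt]
    · intro i
      have hi : i.1 < 2 := i.2
      have : i.1 = 0 ∨ i.1 = 1 := by omega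
      rcases this with h | h
      · rw [show i = ⟨0, by omega⟩ from Fin.ext h]
        simp [e0, hp, hs, List.get]
      · rw [show i = ⟨1, by omega⟩ from Fin.ext h]
        simp [e0, hp, hs, List.get]
  have he0soft : IsSoftEmbedding PartialNonIncl p s e0 := by
    refine ⟨he0pos, ?_⟩
    intro i j hlt1 hlt2
    have hi : i.1 < 1 := i.2
    have hi0 : i.1 = 0 := by omega
    simp only [e0] at hlt1 hlt2
    simp only [hi0] at hlt1 hlt2
    norm_num at hlt1 hlt2
    have hij : j.1 = 1 ∨ j.1 = 2 := by omega
    have hneg : p.neg.get i = ({b, c} : Finset ι) := by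
      have : i = ⟨0, by simp [hp]⟩ := Fin.ext hi0
      simp [this, hp]
    rw [hneg]
    rcases hij with h | h
    · have : j = ⟨1, by omega⟩ := Fin.ext h
      refine Or.inr ⟨c, by simp, ?_⟩
      simp [this, hs, List.get]
      exact fun hh => (hbc hh.symm).elim
    · have : j = ⟨2, by omega⟩ := Fin.ext h
      refine Or.inr ⟨b, by simp, ?_⟩
      simp [this, hs, List.get]
      exact hbc
  -- soft implies (for any pos embedding, since it's forced) soft embedding
  have hallsoft : ∀ e, IsPosEmbedding p s e → IsSoftEmbedding PartialNonIncl p s e := by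
    intro e he
    obtain ⟨h0, h1⟩ := hforce e he
    have hee : e = e0 := by
      funext i
      have hi : i.1 < 2 := i.2
      have : i.1 = 0 ∨ i.1 = 1 := by omega
      rcases this with h | h
      · rw [show i = ⟨0, by simp [hp]⟩ from Fin.ext h]; rw [h0]; simp [e0]
      · rw [show i = ⟨1, by simp [hp]⟩ from Fin.ext h]; rw [h1]; simp [e0]
    rw [hee]; exact he0soft
  -- no strict embedding
  have hnostrict : ∀ e, ¬ IsStrictEmbedding PartialNonIncl p s e := by
    intro e he
    obtain ⟨h0, h1⟩ := hforce e he.1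
    have := he.2 ⟨0, by simp [hp]⟩
    rw [h0, h1] at this
    have hneg : p.neg.get ⟨0, by simp [hp]⟩ = ({b, c} : Finset ι) := by simp [hp]
    rw [hneg] at this
    have hb : b ∈ segUnion s 0 3 := by
      refine Finset.mem_biUnion.2 ⟨1, by decide, ?_⟩
      simp [hs]
    have hc : c ∈ segUnion s 0 3 := by
      refine Finset.mem_biUnion.2 ⟨2, by decide, ?_⟩
      simp [hs]
    rcases this with h | ⟨x, hx, hx2⟩
    · have : b ∈ ({b, c} : Finset ι) := by simp
      rw [h] at this; simp at this
    · simp only [Finset.mem_insert, Finset.mem_singleton] at hx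
      rcases hx with rfl | rfl
      · exact hx2 hb
      · exact hx2 hc
  refine ⟨⟨e0, he0soft⟩, ⟨⟨e0, he0pos⟩, hallsoft⟩, ?_, ?_⟩
  · rintro ⟨e, he⟩; exact hnostrict e he
  · rintro ⟨⟨e, he⟩, hall⟩; exact hnostrict e (hall e he)

end NSPpaper
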